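/- Fix an integer r ≥ 1 and for each integer n ≥ 1 define E_n(q) = ∏_{j=1}^{r} (q^{n+j} − 1)/(q^{j} − 1), the point count of the Grassmannian of r-planes in (n+r)-space. Then for every real number t ≠ 0, lim_{n→∞} (r!/n^r)·e^{−rt/2}·E_n(e^{t/n}) = ((e^{t/2} − e^{−t/2})/t)^r. -/

import Mathlib

open Filter

/-- `(e^{c/n} - 1)/(c/n) → 1` as `n → ∞`. -/
lemma exp_sub_one_div_lim (c : ℝ) (hc : c ≠ 0) :
    Tendsto (fun n : ℕ => (Real.exp (c / n) - 1) / (c / n)) atTop (nhds 1) := by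
  have h1 : Tendsto (fun x : ℝ => (Real.exp x - 1) / x) (nhdsWithin 0 {0}ᶜ) (nhds 1) := by
    have h := Real.hasDerivAt_exp 0
    rw [hasDerivAt_iff_tendsto_slope] at h
    rw [slope_fun_def_field] at h
    simpa [Real.exp_zero] using h
  have h2 : Tendsto (fun n : ℕ => c / n) atTop (nhdsWithin 0 {0}ᶜ) := by
    rw [tendsto_nhdsWithin_iff]
    refine ⟨tendsto_const_div_atTop_nhds_zero_nat c, ?_⟩
    filter_upwards [eventually_ge_atTop 1] with n hn
    have hn0 : (n : ℝ) ≠ 0 := Nat.cast_ne_zero.mpr (by omega)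
    simp [div_ne_zero hc hn0]
  exact h1.comp h2

theorem aux_factor_lim (t : ℝ) (ht : t ≠ 0) (j : ℕ) (hj : 1 ≤ j) :
    Tendsto (fun n : ℕ =>
        (j : ℝ) / n * Real.exp (-(t / 2)) *
          (((Real.exp (t / n)) ^ (n + j) - 1) / ((Real.exp (t / n)) ^ j - 1)))
      atTop (nhds ((Real.exp (t / 2) - Real.exp (-(t / 2))) / t)) := by
  set c : ℝ := t * j with hc_def
  have hj0 : (j : ℝ) ≠ 0 := Nat.cast_ne_zero.mpr (by omega)
  have hc : c ≠ 0 := mul_ne_zero ht hj0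
  -- limit of the nice closed form
  have hB : Tendsto (fun n : ℕ => (c / n) / (Real.exp (c / n) - 1)) atTop (nhds 1) := by
    have := (exp_sub_one_div_lim c hc).inv₀ one_ne_zero
    simpa [inv_div] using this
  have hA : Tendsto (fun n : ℕ => Real.exp t * Real.exp (c / n) - 1) atTop
      (nhds (Real.exp t - 1)) := by
    have h0 : Tendsto (fun n : ℕ => c / n) atTop (nhds 0) :=
      tendsto_const_div_atTop_nhds_zero_nat c
    have := (Real.continuous_exp.tendsto 0).comp h0
    simpa using ((this.const_mul (Real.exp t)).sub tendsto_const_nhds)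
  have hAB : Tendsto (fun n : ℕ =>
      Real.exp (-(t / 2)) / t * (Real.exp t * Real.exp (c / n) - 1) *
        ((c / n) / (Real.exp (c / n) - 1))) atTop
      (nhds (Real.exp (-(t / 2)) / t * (Real.exp t - 1) * 1)) :=
    ((hA.const_mul _).mul hB)
  have hval : Real.exp (-(t / 2)) / t * (Real.exp t - 1) * 1 =
      (Real.exp (t / 2) - Real.exp (-(t / 2))) / t := by
    rw [mul_one]
    have h : Real.exp (-(t / 2)) * Real.exp t = Real.exp (t / 2) := by
      rw [← Real.exp_add]; ring_nf
    rw [div_mul_eq_mul_div]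
    congr 1
    rw [mul_sub, h, mul_one]
  rw [hval] at hAB
  refine hAB.congr' ?_
  filter_upwards [eventually_ge_atTop 1] with n hn
  have hn0 : (n : ℝ) ≠ 0 := Nat.cast_ne_zero.mpr (by omega)
  have hpow1 : (Real.exp (t / n)) ^ (n + j) = Real.exp t * Real.exp (c / n) := by
    rw [← Real.exp_nat_mul, ← Real.exp_add]
    congr 1
    field_simp
    rw [hc_def]; push_cast; ring
  have hpow2 : (Real.exp (t / n)) ^ j = Real.exp (c / n) := by
    rw [← Real.exp_nat_mul]
    congr 1
    field_simp
    ring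
  rw [hpow1, hpow2]
  have hz : Real.exp (c / n) - 1 ≠ 0 := by
    have hcn : c / n ≠ 0 := div_ne_zero hc hn0
    intro h
    apply hcn
    have h1 : Real.exp (c / n) = Real.exp 0 := by rw [Real.exp_zero]; linarith
    exact Real.exp_injective h1
  field_simp
  ring

theorem grassmannian_count_limit (r : ℕ) (hr : 1 ≤ r) (t : ℝ) (ht : t ≠ 0) :
    Tendsto (fun n : ℕ =>
        (r.factorial : ℝ) / (n : ℝ) ^ r * Real.exp (-(r * t / 2)) *
          ∏ j ∈ Finset.Icc 1 r,
            ((Real.exp (t / n)) ^ (n + j) - 1) / ((Real.exp (t / n)) ^ j - 1))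
      atTop
      (nhds (((Real.exp (t / 2) - Real.exp (-(t / 2))) / t) ^ r)) := by
  have hcard : (Finset.Icc 1 r).card = r := by simp
  have hprod : Tendsto (fun n : ℕ => ∏ j ∈ Finset.Icc 1 r,
      ((j : ℝ) / n * Real.exp (-(t / 2)) *
        (((Real.exp (t / n)) ^ (n + j) - 1) / ((Real.exp (t / n)) ^ j - 1))))
      atTop (nhds (∏ _j ∈ Finset.Icc 1 r,
        (Real.exp (t / 2) - Real.exp (-(t / 2))) / t)) := by
    refine tendsto_finset_prod _ (fun j hj => ?_)
    exact aux_factor_lim t ht j (Finset.mem_Icc.mp hj).1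
  rw [Finset.prod_const, hcard] at hprod
  refine hprod.congr' ?_
  filter_upwards [eventually_ge_atTop 1] with n hn
  have hn0 : (n : ℝ) ≠ 0 := Nat.cast_ne_zero.mpr (by omega)
  rw [Finset.prod_mul_distrib, Finset.prod_mul_distrib, Finset.prod_const, hcard]
  have h1 : ∏ j ∈ Finset.Icc 1 r, ((j : ℝ) / n) = (r.factorial : ℝ) / (n : ℝ) ^ r := by
    rw [Finset.prod_div_distrib, Finset.prod_const, hcard]
    congr 1
    have : ∏ j ∈ Finset.Icc 1 r, (j : ℝ) = ((∏ j ∈ Finset.Icc 1 r, j : ℕ) : ℝ) := by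
      push_cast; ring
    rw [this]
    congr 1
    rw [← Finset.Ico_add_one_right_eq_Icc]
    exact Finset.prod_Ico_id_eq_factorial r
  have h2 : Real.exp (-(t / 2)) ^ r = Real.exp (-(r * t / 2)) := by
    rw [← Real.exp_nat_mul]
    congr 1
    ring
  rw [h1, h2]
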